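/- Any disjoint layout λ of n unit squares can be transformed into a disjoint layout λ' with the same orthogonal order and the same y-coordinates (hence the same height), such that W(λ') ≤ W(λ) and W(λ') ∈ [w, w + ε] for some integer w ∈ {1, …, n} and any prescribed ε > 0. -/

import Mathlib

open scoped Classical

/-- An axis-parallel line in the plane: `vert a` is the line `x = a`,
`horiz b` is the line `y = b`. -/
inductive ALine where
  | vert : ℝ → ALine
  | horiz : ℝ → ALine

/-- `a` lies strictly between `u` and `v`. -/
def strictBetween (a u v : ℝ) : Prop := (u < a ∧ a < v) ∨ (v < a ∧ a < u)

/-- An axis-parallel line hits the segment joining `p` and `q` iff it meets the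
relative interior of the segment but neither endpoint. -/
def ALine.hits : ALine → ℝ × ℝ → ℝ × ℝ → Prop
  | .vert a, p, q => strictBetween a p.1 q.1
  | .horiz b, p, q => strictBetween b p.2 q.2

/-- The line contains the point `p`. -/
def ALine.containsPt : ALine → ℝ × ℝ → Prop
  | .vert a, p => p.1 = a
  | .horiz b, p => p.2 = b

/-- The line is vertical. -/
def ALine.isVert : ALine → Prop
  | .vert _ => True
  | .horiz _ => False

/-- The line is horizontal. -/
def ALine.isHoriz : ALine → Prop
  | .vert _ => False
  | .horiz _ => True

/-- Two layouts (assignments of centers to the items indexed by `ι`) have the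
same orthogonal order. -/
def orthOrder {ι : Type*} (f g : ι → ℝ × ℝ) : Prop :=
  ∀ i j : ι,
    ((f i).1 < (f j).1 ↔ (g i).1 < (g j).1) ∧
    ((f i).1 = (f j).1 ↔ (g i).1 = (g j).1) ∧
    ((f i).2 < (f j).2 ↔ (g i).2 < (g j).2) ∧
    ((f i).2 = (f j).2 ↔ (g i).2 = (g j).2)

/-- A layout of unit squares is disjoint iff any two distinct centers are at
distance at least 1 in the `x`- or the `y`-coordinate. -/
def disjointUnitLayout {ι : Type*} (f : ι → ℝ × ℝ) : Prop :=
  ∀ i j : ι, i ≠ j → 1 ≤ |(f i).1 - (f j).1| ∨ 1 ≤ |(f i).2 - (f j).2|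

/-- Width of the bounding box of a layout of unit squares. -/
noncomputable def unitWidth {n : ℕ} (f : Fin n → ℝ × ℝ) : ℝ :=
  (⨆ i, (f i).1) - (⨅ i, (f i).1) + 1

/-- Height of the bounding box of a layout of unit squares. -/
noncomputable def unitHeight {n : ℕ} (f : Fin n → ℝ × ℝ) : ℝ :=
  (⨆ i, (f i).2) - (⨅ i, (f i).2) + 1

noncomputable def Ufun (C : ℕ → ℕ → Prop) (step : ℕ → ℝ) : ℕ → ℝ
  | 0 => 0
  | (k+1) =>
    if ∃ l, l ≤ k ∧ C l (k+1) then
      max (Ufun C step k + step k)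
        (Ufun C step (Nat.findGreatest (fun l => C l (k+1)) k) + 1)
    else Ufun C step k + step k
  termination_by k => k
  decreasing_by
    all_goals first
      | exact Nat.lt_succ_self _
      | exact Nat.lt_succ_of_le (Nat.findGreatest_le _)

lemma Ufun_zero (C : ℕ → ℕ → Prop) (step : ℕ → ℝ) : Ufun C step 0 = 0 := by
  rw [Ufun]

lemma Ufun_succ_ge (C : ℕ → ℕ → Prop) (step : ℕ → ℝ) (k : ℕ) :
    Ufun C step k + step k ≤ Ufun C step (k+1) := by
  rw [Ufun]
  split
  · exact le_max_left _ _
  · exact le_rfl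

lemma Ufun_strictMono (C : ℕ → ℕ → Prop) (step : ℕ → ℝ) (hstep : ∀ k, 0 < step k) :
    StrictMono (Ufun C step) := by
  apply strictMono_nat_of_lt_succ
  intro k
  have := Ufun_succ_ge C step k
  have := hstep k
  linarith

lemma Ufun_constraint (C : ℕ → ℕ → Prop) (step : ℕ → ℝ) (hstep : ∀ k, 0 < step k)
    {l k : ℕ} (hl : l ≤ k) (hC : C l (k+1)) :
    Ufun C step l + 1 ≤ Ufun C step (k+1) := by
  rw [Ufun, if_pos ⟨l, hl, hC⟩]
  have h1 : l ≤ Nat.findGreatest (fun l => C l (k+1)) k := Nat.le_findGreatest hl hC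
  have h2 := (Ufun_strictMono C step hstep).monotone h1
  exact le_trans (by linarith) (le_max_right _ _)

lemma Ufun_le_bound (C : ℕ → ℕ → Prop) (step : ℕ → ℝ) (B : ℕ → ℝ) (m : ℕ)
    (hB0 : 0 ≤ B 0)
    (hs : ∀ k, k + 1 < m → step k ≤ B (k+1) - B k)
    (hCB : ∀ l k, l ≤ k → k + 1 < m → C l (k+1) → B l + 1 ≤ B (k+1)) :
    ∀ k, k < m → Ufun C step k ≤ B k := by
  intro k
  induction k using Nat.strong_induction_on with
  | _ k ih =>
    match k with
    | 0 => intro _; rw [Ufun_zero]; exact hB0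
    | (k+1) =>
      intro hkm
      rw [Ufun]
      have hk1 : Ufun C step k ≤ B k := ih k (Nat.lt_succ_self k) (by omega)
      have hsk := hs k hkm
      split
      · next h =>
        obtain ⟨l, hl, hC⟩ := h
        have hfgC : C (Nat.findGreatest (fun l => C l (k+1)) k) (k+1) :=
          Nat.findGreatest_spec (P := fun l => C l (k+1)) hl hC
        have hfgk : Nat.findGreatest (fun l => C l (k+1)) k ≤ k := Nat.findGreatest_le k
        have h2 : Ufun C step (Nat.findGreatest (fun l => C l (k+1)) k)
            ≤ B (Nat.findGreatest (fun l => C l (k+1)) k) := ih _ (by omega) (by omega)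
        have h3 := hCB _ k hfgk hkm hfgC
        apply max_le <;> linarith
      · linarith

lemma Ufun_exists_nat (C : ℕ → ℕ → Prop) (step : ℕ → ℝ) (δ : ℝ) (hδ : 0 ≤ δ)
    (hs : ∀ k, 0 < step k ∧ step k ≤ δ) :
    ∀ k, ∃ a : ℕ, a ≤ k ∧ (a : ℝ) ≤ Ufun C step k ∧ Ufun C step k ≤ a + k * δ := by
  intro k
  induction k using Nat.strong_induction_on with
  | _ k ih =>
    match k with
    | 0 => exact ⟨0, le_rfl, by rw [Ufun_zero]; norm_num, by rw [Ufun_zero]; norm_num⟩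
    | (k+1) =>
      obtain ⟨a, hak, ha1, ha2⟩ := ih k (Nat.lt_succ_self k)
      obtain ⟨hsk1, hsk2⟩ := hs k
      rw [Ufun]
      split
      · set fg := Nat.findGreatest (fun l => C l (k+1)) k with hfg
        have hfgk : fg ≤ k := Nat.findGreatest_le k
        obtain ⟨b, hbk, hb1, hb2⟩ := ih fg (by omega)
        rcases max_cases (Ufun C step k + step k) (Ufun C step fg + 1) with ⟨heq, _⟩ | ⟨heq, _⟩ <;>
            rw [heq]
        · refine ⟨a, by omega, by linarith, ?_⟩
          push_cast
          linarith
        · refine ⟨b + 1, by omega, by push_cast; linarith, ?_⟩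
          have hcast : (fg : ℝ) ≤ (k : ℝ) + 1 := by exact_mod_cast Nat.le_succ_of_le hfgk
          have := mul_le_mul_of_nonneg_right hcast hδ
          push_cast
          linarith [mul_le_mul_of_nonneg_right (show (fg:ℝ) ≤ (k:ℝ)+1 from hcast) hδ]
      · refine ⟨a, by omega, by linarith, ?_⟩
        push_cast
        linarith

/-- any disjoint layout of `n` unit squares can be compressed,
keeping the `y`-coordinates and the orthogonal order, into a disjoint layout
whose width is at most the original width and lies in `[w, w + ε]` for some
integer `w ∈ {1, …, n}`. -/
theorem stmt5 (n : ℕ) (hn : 0 < n) (lay : Fin n → ℝ × ℝ)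
    (hdisj : disjointUnitLayout lay) (ε : ℝ) (hε : 0 < ε) :
    ∃ lay' : Fin n → ℝ × ℝ,
      disjointUnitLayout lay' ∧ orthOrder lay lay' ∧
      (∀ i, (lay' i).2 = (lay i).2) ∧
      unitWidth lay' ≤ unitWidth lay ∧
      ∃ w : ℕ, 1 ≤ w ∧ w ≤ n ∧
        (w : ℝ) ≤ unitWidth lay' ∧ unitWidth lay' ≤ (w : ℝ) + ε := by
  classical
  have : Nonempty (Fin n) := ⟨⟨0, hn⟩⟩
  set X : Fin n → ℝ := fun i => (lay i).1 with hX
  set Y : Fin n → ℝ := fun i => (lay i).2 with hY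
  set S : Finset ℝ := Finset.image X Finset.univ with hS
  set L : List ℝ := S.sort (· ≤ ·) with hLdef
  set m : ℕ := S.card with hm
  have hLlen : L.length = m := Finset.length_sort _
  have hLsort : L.Pairwise (· < ·) := (Finset.sortedLT_sort _).pairwise
  have hmemL : ∀ i, X i ∈ L := fun i =>
    (Finset.mem_sort _).2 (Finset.mem_image_of_mem _ (Finset.mem_univ i))
  set idx : Fin n → ℕ := fun i => L.idxOf (X i) with hidxdef
  have hidxlt : ∀ i, idx i < m := fun i => hLlen ▸ List.idxOf_lt_length_iff.2 (hmemL i)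
  set v : ℕ → ℝ := fun k => L.getD k 0 with hvdef
  have hvget : ∀ k, ∀ hk : k < m, v k = L.get ⟨k, hLlen ▸ hk⟩ := by
    intro k hk
    show L.getD k 0 = _
    rw [List.getD_eq_getElem L 0 (hLlen ▸ hk), List.get_eq_getElem]
  have hvX : ∀ i, v (idx i) = X i := by
    intro i
    have h : idx i < L.length := List.idxOf_lt_length_iff.2 (hmemL i)
    show L.getD (idx i) 0 = X i
    rw [List.getD_eq_getElem L 0 h]
    exact List.getElem_idxOf h
  have hvmono : ∀ k l, k < l → l < m → v k < v l := by
    intro k l hkl hlm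
    have hkm : k < m := lt_trans hkl hlm
    rw [hvget k hkm, hvget l hlm]
    exact hLsort.sortedLT.strictMono_get (show (⟨k, hLlen ▸ hkm⟩ : Fin L.length) < ⟨l, hLlen ▸ hlm⟩ from hkl)
  have hvinj : ∀ k l, k < m → l < m → v k = v l → k = l := by
    intro k l hk hl hkl
    rcases lt_trichotomy k l with h | h | h
    · exact absurd hkl (ne_of_lt (hvmono k l h hl))
    · exact h
    · exact absurd hkl.symm (ne_of_lt (hvmono l k h hk))
  have hlt_iff : ∀ i j, X i < X j ↔ idx i < idx j := by
    intro i j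
    constructor
    · intro h
      by_contra hc
      push_neg at hc
      rcases Nat.lt_or_ge (idx j) (idx i) with h2 | h2
      · have := hvmono _ _ h2 (hidxlt i)
        rw [hvX, hvX] at this
        linarith
      · have : idx i = idx j := by omega
        have := congrArg v this
        rw [hvX, hvX] at this
        linarith
    · intro h
      have := hvmono _ _ h (hidxlt j)
      rw [hvX, hvX] at this
      exact this
  have heq_iff : ∀ i j, X i = X j ↔ idx i = idx j := by
    intro i j
    constructor
    · intro h; rw [hidxdef]; simp only; rw [h]
    · intro h
      have := congrArg v h
      rwa [hvX, hvX] at this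
  have hsurj : ∀ k, k < m → ∃ i, idx i = k := by
    intro k hk
    have hmem : v k ∈ S := by
      rw [hvget k hk, ← Finset.mem_sort (· ≤ ·)]
      exact List.get_mem _ _
    obtain ⟨i, _, hXi⟩ := Finset.mem_image.1 hmem
    refine ⟨i, hvinj _ _ (hidxlt i) hk ?_⟩
    rw [hvX, hXi]
  set C : ℕ → ℕ → Prop :=
    fun l k => l < k ∧ ∃ i j : Fin n, idx i = k ∧ idx j = l ∧ |Y i - Y j| < 1 with hCdef
  set δ : ℝ := ε / n with hδdef
  have hδpos : 0 < δ := div_pos hε (by exact_mod_cast hn)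
  set step : ℕ → ℝ := fun k => if k + 1 < m then min δ (v (k+1) - v k) else δ with hstepdef
  have hsteppos : ∀ k, 0 < step k := by
    intro k
    rw [hstepdef]
    simp only
    split
    · next h => exact lt_min hδpos (by linarith [hvmono k (k+1) (Nat.lt_succ_self k) h])
    · exact hδpos
  have hstepδ : ∀ k, step k ≤ δ := by
    intro k
    rw [hstepdef]
    simp only
    split
    · exact min_le_left _ _
    · exact le_rfl
  set U : ℕ → ℝ := Ufun C step with hUdef
  have hUmono : StrictMono U := Ufun_strictMono C step hsteppos
  have hm1 : 1 ≤ m := by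
    rw [hm]
    exact Finset.card_pos.2 ⟨X ⟨0, hn⟩, Finset.mem_image_of_mem _ (Finset.mem_univ _)⟩
  have hmn : m ≤ n := le_trans Finset.card_image_le (by simp)
  have hCv : ∀ l k, C l k → v l + 1 ≤ v k := by
    rintro l k ⟨hlk, i, j, rfl, rfl, hYij⟩
    have hne : i ≠ j := by
      intro h; rw [h] at hlk; exact lt_irrefl _ hlk
    rcases hdisj i j hne with h | h
    · have hXlt : X j < X i := (hlt_iff j i).2 hlk
      rw [hvX, hvX]
      rw [abs_of_pos (by linarith : (0:ℝ) < X i - X j)] at h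
      linarith
    · exact absurd h (not_le.2 hYij)
  set lay' : Fin n → ℝ × ℝ := fun i => (U (idx i), Y i) with hlay'
  have hfst : ∀ i, (lay' i).1 = U (idx i) := fun i => rfl
  refine ⟨lay', ?_, ?_, fun i => rfl, ?_⟩
  · -- disjointness
    intro i j hne
    by_cases hY1 : 1 ≤ |Y i - Y j|
    · right; exact hY1
    push_neg at hY1
    left
    simp only [hfst]
    have hXne : idx i ≠ idx j := by
      intro h
      have hXeq : X i = X j := (heq_iff i j).2 h
      rcases hdisj i j hne with hd | hd
      · rw [show (lay i).1 - (lay j).1 = X i - X j from rfl, hXeq, sub_self, abs_zero] at hd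
        linarith
      · exact absurd hd (not_le.2 hY1)
    rcases lt_or_gt_of_ne hXne with h | h
    · -- idx i < idx j : C (idx i) (idx j)
      obtain ⟨k, hk⟩ : ∃ k, idx j = k + 1 := ⟨idx j - 1, by omega⟩
      have hCij : C (idx i) (k+1) := by
        rw [← hk]
        exact ⟨h, j, i, rfl, rfl, by rw [abs_sub_comm]; exact hY1⟩
      have := Ufun_constraint C step hsteppos (by omega : idx i ≤ k) hCij
      rw [← hk] at this
      rw [abs_of_nonpos (by linarith : U (idx i) - U (idx j) ≤ 0)]
      linarith
    · obtain ⟨k, hk⟩ : ∃ k, idx i = k + 1 := ⟨idx i - 1, by omega⟩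
      have hCij : C (idx j) (k+1) := by
        rw [← hk]
        exact ⟨h, i, j, rfl, rfl, hY1⟩
      have := Ufun_constraint C step hsteppos (by omega : idx j ≤ k) hCij
      rw [← hk] at this
      rw [abs_of_nonneg (by linarith : (0:ℝ) ≤ U (idx i) - U (idx j))]
      linarith
  · -- orthOrder
    intro i j
    refine ⟨?_, ?_, Iff.rfl, Iff.rfl⟩
    · simp only [hfst]
      rw [show (lay i).1 = X i from rfl, show (lay j).1 = X j from rfl, hlt_iff i j]
      exact (hUmono.lt_iff_lt).symm
    · simp only [hfst]
      rw [show (lay i).1 = X i from rfl, show (lay j).1 = X j from rfl, heq_iff i j]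
      exact ⟨fun h => by rw [h], fun h => hUmono.injective h⟩
  · -- width bounds
    obtain ⟨i0, hi0⟩ := hsurj 0 (by omega)
    obtain ⟨im, him⟩ := hsurj (m-1) (by omega)
    have hidxle : ∀ i, idx i ≤ m - 1 := fun i => by have := hidxlt i; omega
    have hsupU : (⨆ i, (lay' i).1) = U (m-1) := by
      simp only [hfst]
      apply le_antisymm
      · exact ciSup_le fun i => hUmono.monotone (hidxle i)
      · calc U (m-1) = U (idx im) := by rw [him]
          _ ≤ _ := le_ciSup (f := fun i => U (idx i))
            (Set.Finite.bddAbove (Set.finite_range _)) im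
    have hinfU : (⨅ i, (lay' i).1) = 0 := by
      simp only [hfst]
      apply le_antisymm
      · calc (⨅ i, U (idx i)) ≤ U (idx i0) :=
              ciInf_le (f := fun i => U (idx i))
                (Set.Finite.bddBelow (Set.finite_range _)) i0
          _ = 0 := by rw [hi0, hUdef, Ufun_zero]
      · refine le_ciInf fun i => ?_
        calc (0:ℝ) = U 0 := by rw [hUdef, Ufun_zero]
          _ ≤ U (idx i) := hUmono.monotone (Nat.zero_le _)
    have hvmono' : ∀ k l, k ≤ l → l < m → v k ≤ v l := by
      intro k l hkl hlm
      rcases eq_or_lt_of_le hkl with h | h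
      · rw [h]
      · exact le_of_lt (hvmono k l h hlm)
    have hsupX : (⨆ i, (lay i).1) = v (m-1) := by
      apply le_antisymm
      · refine ciSup_le fun i => ?_
        calc (lay i).1 = v (idx i) := (hvX i).symm
          _ ≤ v (m-1) := hvmono' _ _ (hidxle i) (by omega)
      · calc v (m-1) = v (idx im) := by rw [him]
          _ = X im := hvX im
          _ ≤ _ := le_ciSup (f := fun i => (lay i).1)
            (Set.Finite.bddAbove (Set.finite_range _)) im
    have hinfX : (⨅ i, (lay i).1) = v 0 := by
      apply le_antisymm
      · calc (⨅ i, (lay i).1) ≤ (lay i0).1 :=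
              ciInf_le (f := fun i => (lay i).1)
                (Set.Finite.bddBelow (Set.finite_range _)) i0
          _ = v 0 := by rw [show (lay i0).1 = X i0 from rfl, ← hvX i0, hi0]
      · refine le_ciInf fun i => ?_
        calc v 0 ≤ v (idx i) := hvmono' _ _ (Nat.zero_le _) (hidxlt i)
          _ = (lay i).1 := hvX i
    have hUb : U (m-1) ≤ v (m-1) - v 0 := by
      refine Ufun_le_bound C step (fun k => v k - v 0) m (by simp) ?_ ?_ (m-1) (by omega)
      · intro k hk
        show step k ≤ (v (k+1) - v 0) - (v k - v 0)
        rw [hstepdef]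
        simp only
        rw [if_pos hk]
        have := min_le_right δ (v (k+1) - v k)
        linarith
      · intro l k hlk hkm hC
        have := hCv l (k+1) hC
        show v l - v 0 + 1 ≤ v (k+1) - v 0
        linarith
    have hwidth' : unitWidth lay' = U (m-1) + 1 := by
      rw [unitWidth, hsupU, hinfU]
      ring
    have hwidth : unitWidth lay = v (m-1) - v 0 + 1 := by
      rw [unitWidth, hsupX, hinfX]
    constructor
    · rw [hwidth', hwidth]
      linarith
    · obtain ⟨a, ham, ha1, ha2⟩ :=
        Ufun_exists_nat C step δ hδpos.le (fun k => ⟨hsteppos k, hstepδ k⟩) (m-1)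
      refine ⟨a + 1, by omega, by omega, ?_, ?_⟩
      · rw [hwidth']
        push_cast
        linarith
      · rw [hwidth']
        have hcast : ((m-1:ℕ) : ℝ) ≤ (n : ℝ) := by exact_mod_cast (by omega : m - 1 ≤ n)
        have h1 : ((m-1:ℕ):ℝ) * δ ≤ (n:ℝ) * δ := mul_le_mul_of_nonneg_right hcast hδpos.le
        have h2 : (n:ℝ) * δ = ε := by
          rw [hδdef]
          field_simp
        push_cast
        linarith
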